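/- A word w over {a,b} is central (i.e., w ∈ ψ({a,b}*)) if and only if w is a power of a single letter or w satisfies w = w1 a b w2 = w2 b a w1 for some words w1, w2; in the latter case w1 and w2 are uniquely determined central words, p = |w1| + 2 and q = |w2| + 2 are coprime periods of w, and min{p,q} is the minimal period of w. -/

import Mathlib

def palClosure (w : List Bool) : List Bool :=
  let k := Nat.find (p := fun k => (w.drop k).reverse = w.drop k)
    ⟨w.length, by simp⟩
  w.take k ++ w.drop k ++ (w.take k).reverse

def psi (v : List Bool) : List Bool := v.foldl (fun w x => palClosure (w ++ [x])) []

def E (v : List Bool) : List Bool := v.map (!·)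

def HasPeriod (w : List Bool) (p : ℕ) : Prop :=
  0 < p ∧ ∀ i j (hi : i < w.length) (hj : j < w.length),
    i % p = j % p → w.get ⟨i, hi⟩ = w.get ⟨j, hj⟩

noncomputable def minPeriod (w : List Bool) : ℕ := sInf {p | HasPeriod w p}

def mu (x : Bool) (w : List Bool) : List Bool := w.flatMap (fun y => if y = x then [x] else [x, y])

def muW : List Bool → List Bool → List Bool
  | [], w => w
  | x :: v, w => mu x (muW v w)

def vN (n : ℕ) : List Bool := (List.range n).map (fun i => decide (i % 2 = 1))

def fibF : ℕ → ℕ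
  | 0 => 1
  | 1 => 1
  | n + 2 => fibF (n + 1) + fibF n

def dOp : List Bool → List Bool
  | x :: y :: u => y :: x :: u
  | w => w

def cOp (v : List Bool) : List Bool := (dOp v.reverse).reverse

def contAux : List ℕ → ℕ
  | [] => 1
  | [a] => a
  | a :: b :: t => a * contAux (b :: t) + contAux t

/-! ### getElem helpers -/

lemma gcongr' {w : List Bool} {i j : ℕ} (h : i = j) (hi : i < w.length) :
    w[i]'hi = w[j]'(h ▸ hi) := by subst h; rfl

lemma HasPeriod.pos {w : List Bool} {p : ℕ} (h : HasPeriod w p) : 0 < p := h.1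

lemma HasPeriod.ext {w : List Bool} {p : ℕ} (h : HasPeriod w p) :
    ∀ i j (hi : i < w.length) (hj : j < w.length), i % p = j % p → w[i]'hi = w[j]'hj := by
  intro i j hi hj hm
  have := h.2 i j hi hj hm
  simpa [List.get_eq_getElem] using this

lemma hasPeriod_intro {w : List Bool} {p : ℕ} (hp : 0 < p)
    (h : ∀ i j (hi : i < w.length) (hj : j < w.length), i % p = j % p → w[i]'hi = w[j]'hj) :
    HasPeriod w p := by
  refine ⟨hp, fun i j hi hj hm => ?_⟩
  simpa [List.get_eq_getElem] using h i j hi hj hm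

lemma hasPeriod_of_shift {w : List Bool} {p : ℕ} (hp : 0 < p)
    (h : ∀ i (hip : i + p < w.length), w[i + p]'hip = w[i]'(by omega)) : HasPeriod w p := by
  have key : ∀ i (hi : i < w.length), w[i]'hi = w[i % p]'(Nat.lt_of_le_of_lt (Nat.mod_le _ _) hi) := by
    intro i
    induction i using Nat.strong_induction_on with
    | _ i ih =>
      intro hi
      by_cases hc : i < p
      · exact gcongr' (Nat.mod_eq_of_lt hc).symm hi
      · push_neg at hc
        have h2 : (i - p) + p < w.length := by omega
        have e1 : w[i]'hi = w[(i-p)+p]'h2 := gcongr' (by omega) hi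
        have e2 := h (i - p) h2
        have e3 := ih (i - p) (by omega) (by omega)
        have e4 : w[(i-p) % p]'(Nat.lt_of_le_of_lt (Nat.mod_le _ _) (by omega : i - p < w.length)) =
            w[i % p]'(Nat.lt_of_le_of_lt (Nat.mod_le _ _) hi) :=
          gcongr' (by conv_rhs => rw [show i = (i-p)+p by omega, Nat.add_mod_right]) _
        rw [e1, e2, e3, e4]
  refine hasPeriod_intro hp (fun i j hi hj hm => ?_)
  rw [key i hi, key j hj]
  exact gcongr' hm _

lemma HasPeriod.shift {w : List Bool} {p : ℕ} (h : HasPeriod w p) (i : ℕ)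
    (hip : i + p < w.length) : w[i + p]'hip = w[i]'(by omega) :=
  h.ext _ _ _ _ (Nat.add_mod_right i p)

lemma HasPeriod.getElem_mod {w : List Bool} {p : ℕ} (h : HasPeriod w p) (i : ℕ)
    (hi : i < w.length) : w[i]'hi = w[i % p]'(Nat.lt_of_le_of_lt (Nat.mod_le _ _) hi) :=
  h.ext _ _ _ _ (Nat.mod_mod_of_dvd i dvd_rfl).symm

lemma HasPeriod.take {w : List Bool} {p : ℕ} (h : HasPeriod w p) (n : ℕ) :
    HasPeriod (w.take n) p := by
  refine hasPeriod_intro h.pos (fun i j hi hj hm => ?_)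
  simp only [List.length_take] at hi hj
  rw [List.getElem_take, List.getElem_take]
  exact h.ext i j (by omega) (by omega) hm

/-! ### Fine and Wilf -/

lemma fineWilf_aux : ∀ N p q (w : List Bool), q ≤ N → 0 < p → p ≤ q →
    HasPeriod w p → HasPeriod w q → p + q - Nat.gcd p q ≤ w.length →
    HasPeriod w (Nat.gcd p q) := by
  intro N
  induction N with
  | zero => intro p q w hq hp hpq _ _ _; omega
  | succ N ih =>
    intro p q w hqN hp hpq hwp hwq hlen
    rcases eq_or_lt_of_le hpq with heq | hlt
    · subst heq
      simpa [Nat.gcd_self] using hwp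
    · set g := Nat.gcd p q with hg
      have hgp : g ∣ p := Nat.gcd_dvd_left p q
      have hgq : g ∣ q := Nat.gcd_dvd_right p q
      have hgpos : 0 < g := Nat.gcd_pos_of_pos_left q hp
      set q' := q - p with hq'
      have hq'pos : 0 < q' := by omega
      have hgq' : g ∣ q' := Nat.dvd_sub hgq hgp
      have hgle : g ≤ q' := Nat.le_of_dvd hq'pos hgq'
      have hgcd' : Nat.gcd p q' = g := by
        rw [hg]
        conv_rhs => rw [show q = q' + p by omega]
        rw [Nat.gcd_add_self_right]
      have h2p : p + p ≤ w.length := by omega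
      set u := w.take (w.length - p) with hu
      have hul : u.length = w.length - p := by simp [hu]
      have hup : HasPeriod u p := hwp.take _
      have huq' : HasPeriod u q' := by
        refine hasPeriod_of_shift hq'pos (fun i hiq => ?_)
        rw [hul] at hiq
        simp only [hu]
        rw [List.getElem_take, List.getElem_take]
        have h1 : i + q' + p < w.length := by omega
        have e1 : w[i + q']'(by omega) = w[i+q'+p]'h1 := (hwp.shift (i+q') h1).symm
        have e2 : w[i+q'+p]'h1 = w[i+q]'(by omega) := gcongr' (by omega) _
        have e3 : w[i+q]'(by omega) = w[i]'(by omega) := hwq.shift i (by omega)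
        rw [e1, e2, e3]
      have hug : HasPeriod u g := by
        rcases le_total p q' with hc | hc
        · have := ih p q' u (by omega) hp hc hup huq' (by rw [hgcd', hul]; omega)
          rwa [hgcd'] at this
        · have := ih q' p u (by omega) hq'pos hc huq' hup
            (by rw [Nat.gcd_comm, hgcd', hul]; omega)
          rwa [Nat.gcd_comm, hgcd'] at this
      -- lift
      refine hasPeriod_intro hgpos (fun i j hi hj hm => ?_)
      have hmplt : ∀ k : ℕ, k % p < u.length := by intro k; rw [hul]; have := Nat.mod_lt k hp; omega
      have key : ∀ k (hk : k < w.length), w[k]'hk = u[k % p]'(hmplt k) := by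
        intro k hk
        rw [hwp.getElem_mod k hk]
        simp only [hu]
        rw [List.getElem_take]
      rw [key i hi, key j hj]
      have : (i % p) % g = (j % p) % g := by
        rw [Nat.mod_mod_of_dvd i hgp, Nat.mod_mod_of_dvd j hgp]; exact hm
      exact hug.ext _ _ _ _ this

lemma fineWilf {p q : ℕ} {w : List Bool} (hwp : HasPeriod w p) (hwq : HasPeriod w q)
    (hlen : p + q - Nat.gcd p q ≤ w.length) : HasPeriod w (Nat.gcd p q) := by
  rcases le_total p q with h | h
  · exact fineWilf_aux q p q w le_rfl hwp.pos h hwp hwq hlen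
  · rw [Nat.gcd_comm]
    exact fineWilf_aux p q p w le_rfl hwq.pos h hwq hwp (by rw [Nat.gcd_comm]; omega)

/-! ### Decompositions -/

section Decomp

variable {w w₁ w₂ : List Bool}

lemma getElem_of_drop {w t : List Bool} {n : ℕ} (h : w.drop n = t) (i : ℕ)
    (hi : i < t.length) (hw : n + i < w.length) : w[n + i]'hw = t[i]'hi := by
  subst h; exact (List.getElem_drop ..).symm

lemma getElem_of_prefix {w t : List Bool} (h : t <+: w) (i : ℕ)
    (hi : i < t.length) (hw : i < w.length) : w[i]'hw = t[i]'hi := by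
  obtain ⟨r, rfl⟩ := h
  exact (List.getElem_append_left hi)

lemma decomp_length (h1 : w = w₁ ++ [false, true] ++ w₂) :
    w.length = w₁.length + w₂.length + 2 := by subst h1; simp; omega

lemma decomp_drop1 (h1 : w = w₁ ++ [false, true] ++ w₂) :
    w.drop w₁.length = [false, true] ++ w₂ := by
  subst h1; rw [List.append_assoc]; exact List.drop_left

lemma decomp_drop1' (h1 : w = w₁ ++ [false, true] ++ w₂) :
    w.drop (w₁.length + 2) = w₂ := by
  subst h1; exact List.drop_left' (by simp)

lemma decomp_take1 (h1 : w = w₁ ++ [false, true] ++ w₂) :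
    w.take w₁.length = w₁ := by
  subst h1; rw [List.append_assoc]; exact List.take_left

lemma decomp_prefix1 (h1 : w = w₁ ++ [false, true] ++ w₂) : w₁ <+: w :=
  ⟨[false, true] ++ w₂, by rw [h1]; simp⟩

lemma decomp_pos1 (h1 : w = w₁ ++ [false, true] ++ w₂) (hw : w₁.length < w.length) :
    w[w₁.length]'hw = false := by
  have h := getElem_of_drop (decomp_drop1 h1) 0 (by simp) (by omega)
  have e : w[w₁.length]'hw = w[w₁.length + 0]'(by omega) := gcongr' (by omega) _
  rw [e, h]; rfl

lemma decomp_pos2 (h1 : w = w₁ ++ [false, true] ++ w₂) (hw : w₁.length + 1 < w.length) :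
    w[w₁.length + 1]'hw = true := by
  have h := getElem_of_drop (decomp_drop1 h1) 1 (by simp) (by omega)
  rw [h]; rfl

lemma decomp_pos3 (h2 : w = w₂ ++ [true, false] ++ w₁) (hw : w₂.length < w.length) :
    w[w₂.length]'hw = true := by
  have hd : w.drop w₂.length = [true, false] ++ w₁ := by
    subst h2; rw [List.append_assoc]; exact List.drop_left
  have h := getElem_of_drop hd 0 (by simp) (by omega)
  have e : w[w₂.length]'hw = w[w₂.length + 0]'(by omega) := gcongr' (by omega) _
  rw [e, h]; rfl

lemma decomp_period1 (h1 : w = w₁ ++ [false, true] ++ w₂)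
    (h2 : w = w₂ ++ [true, false] ++ w₁) : HasPeriod w (w₁.length + 2) := by
  have hlen := decomp_length h1
  refine hasPeriod_of_shift (by omega) (fun i hip => ?_)
  have hi2 : i < w₂.length := by omega
  have e1 : w[i + (w₁.length + 2)]'hip = w[(w₁.length + 2) + i]'(by omega) :=
    gcongr' (by omega) _
  rw [e1, getElem_of_drop (decomp_drop1' h1) i hi2 (by omega)]
  exact (getElem_of_prefix ⟨[true, false] ++ w₁, by rw [h2]; simp⟩ i hi2 (by omega)).symm

lemma decomp_period2 (h1 : w = w₁ ++ [false, true] ++ w₂)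
    (h2 : w = w₂ ++ [true, false] ++ w₁) : HasPeriod w (w₂.length + 2) := by
  have hlen := decomp_length h1
  have hd : w.drop (w₂.length + 2) = w₁ := by
    subst h2; exact List.drop_left' (by simp)
  refine hasPeriod_of_shift (by omega) (fun i hip => ?_)
  have hi1 : i < w₁.length := by omega
  have e1 : w[i + (w₂.length + 2)]'hip = w[(w₂.length + 2) + i]'(by omega) :=
    gcongr' (by omega) _
  rw [e1, getElem_of_drop hd i hi1 (by omega)]
  exact (getElem_of_prefix (decomp_prefix1 h1) i hi1 (by omega)).symm

lemma modeq_shift {g a b : ℕ} (hga : g ∣ a) (hgb : g ∣ b) (ha : 2 ≤ a) (hb : 2 ≤ b) :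
    (a - 2) % g = (b - 2) % g := by
  have h1 : (a - 2) + 2 ≡ (b - 2) + 2 [MOD g] := by
    rw [show a - 2 + 2 = a by omega, show b - 2 + 2 = b by omega]
    calc a ≡ 0 [MOD g] := (Nat.modEq_zero_iff_dvd).2 hga
    _ ≡ b [MOD g] := ((Nat.modEq_zero_iff_dvd).2 hgb).symm
  exact h1.add_right_cancel' 2

lemma decomp_contra {w wa wb : List Bool} (ha1 : w = wa ++ [false, true] ++ wb)
    {g : ℕ} (hper : HasPeriod w g) (hga : g ∣ wa.length + 2)
    {wc wd : List Bool} (hc2 : w = wc ++ [true, false] ++ wd) (hgc : g ∣ wc.length + 2) :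
    False := by
  have hlen := decomp_length ha1
  have hlenc : w.length = wc.length + wd.length + 2 := by subst hc2; simp; omega
  have hmod : wa.length % g = wc.length % g := by
    have := modeq_shift hga hgc (by omega) (by omega)
    simpa using this
  have := hper.ext wa.length wc.length (by omega) (by omega) hmod
  rw [decomp_pos1 ha1 (by omega), decomp_pos3 hc2 (by omega)] at this
  exact Bool.false_ne_true this

lemma decomp_coprime (h1 : w = w₁ ++ [false, true] ++ w₂)
    (h2 : w = w₂ ++ [true, false] ++ w₁) :
    Nat.Coprime (w₁.length + 2) (w₂.length + 2) := by
  have hlen := decomp_length h1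
  by_contra hc
  have hgpos : 0 < Nat.gcd (w₁.length + 2) (w₂.length + 2) :=
    Nat.gcd_pos_of_pos_left _ (by omega)
  have hg2 : 2 ≤ Nat.gcd (w₁.length + 2) (w₂.length + 2) := by
    rcases Nat.lt_or_ge (Nat.gcd (w₁.length + 2) (w₂.length + 2)) 2 with h | h
    · interval_cases h : Nat.gcd (w₁.length + 2) (w₂.length + 2) <;> simp_all [Nat.Coprime]
    · exact h
  have hper := fineWilf (decomp_period1 h1 h2) (decomp_period2 h1 h2) (by omega)
  exact decomp_contra h1 hper (Nat.gcd_dvd_left _ _) h2 (Nat.gcd_dvd_right _ _)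

lemma decomp_unique (h1 : w = w₁ ++ [false, true] ++ w₂)
    (h2 : w = w₂ ++ [true, false] ++ w₁) :
    ∀ w₁s w₂s : List Bool,
      w = w₁s ++ [false, true] ++ w₂s → w = w₂s ++ [true, false] ++ w₁s →
      w₁s = w₁ ∧ w₂s = w₂ := by
  intro w₁s w₂s g1 g2
  have hlen := decomp_length h1
  have hlens := decomp_length g1
  rcases lt_trichotomy w₁s.length w₁.length with hlt | heq | hgt
  · exfalso
    have hgpos : 0 < Nat.gcd (w₁s.length + 2) (w₂.length + 2) :=
      Nat.gcd_pos_of_pos_left _ (by omega)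
    have hper := fineWilf (decomp_period1 g1 g2) (decomp_period2 h1 h2) (by omega)
    exact decomp_contra g1 hper (Nat.gcd_dvd_left _ _) h2 (Nat.gcd_dvd_right _ _)
  · constructor
    · rw [← decomp_take1 h1, ← decomp_take1 g1, heq]
    · rw [← decomp_drop1' h1, ← decomp_drop1' g1, heq]
  · exfalso
    have hgpos : 0 < Nat.gcd (w₁.length + 2) (w₂s.length + 2) :=
      Nat.gcd_pos_of_pos_left _ (by omega)
    have hper := fineWilf (decomp_period1 h1 h2) (decomp_period2 g1 g2) (by omega)
    exact decomp_contra h1 hper (Nat.gcd_dvd_left _ _) g2 (Nat.gcd_dvd_right _ _)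

lemma decomp_minPeriod (h1 : w = w₁ ++ [false, true] ++ w₂)
    (h2 : w = w₂ ++ [true, false] ++ w₁) :
    minPeriod w = min (w₁.length + 2) (w₂.length + 2) := by
  have hlen := decomp_length h1
  have hmem : HasPeriod w (min (w₁.length + 2) (w₂.length + 2)) := by
    rcases min_cases (w₁.length + 2) (w₂.length + 2) with ⟨h, _⟩ | ⟨h, _⟩ <;> rw [h]
    · exact decomp_period1 h1 h2
    · exact decomp_period2 h1 h2
  have hlb : ∀ r, HasPeriod w r → min (w₁.length + 2) (w₂.length + 2) ≤ r := by
    intro r hr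
    by_contra hc
    push_neg at hc
    have hr0 : 0 < r := hr.pos
    have hg1pos : 0 < Nat.gcd r (w₁.length + 2) := Nat.gcd_pos_of_pos_left _ hr0
    have hg2pos : 0 < Nat.gcd r (w₂.length + 2) := Nat.gcd_pos_of_pos_left _ hr0
    have hg1 := fineWilf hr (decomp_period1 h1 h2) (by omega)
    have hg2 := fineWilf hr (decomp_period2 h1 h2) (by omega)
    have hle1 : Nat.gcd r (w₁.length + 2) ≤ r := Nat.le_of_dvd hr0 (Nat.gcd_dvd_left _ _)
    have hle2 : Nat.gcd r (w₂.length + 2) ≤ r := Nat.le_of_dvd hr0 (Nat.gcd_dvd_left _ _)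
    have hgpos : 0 < Nat.gcd (Nat.gcd r (w₁.length + 2)) (Nat.gcd r (w₂.length + 2)) :=
      Nat.gcd_pos_of_pos_left _ hg1pos
    have hg := fineWilf hg1 hg2 (by omega)
    exact decomp_contra h1 hg
      (dvd_trans (Nat.gcd_dvd_left _ _) (Nat.gcd_dvd_right r _)) h2
      (dvd_trans (Nat.gcd_dvd_right _ _) (Nat.gcd_dvd_right r _))
  have hne : {r | HasPeriod w r}.Nonempty := ⟨_, hmem⟩
  exact le_antisymm (Nat.sInf_le hmem) (hlb _ (Nat.sInf_mem hne))

end Decomp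

/-! ### Palindromic closure -/

def pcK (w : List Bool) : ℕ :=
  Nat.find (p := fun k => (w.drop k).reverse = w.drop k) ⟨w.length, by simp⟩

lemma palClosure_def (w : List Bool) :
    palClosure w = w.take (pcK w) ++ w.drop (pcK w) ++ (w.take (pcK w)).reverse := rfl

lemma pcK_spec (w : List Bool) : (w.drop (pcK w)).reverse = w.drop (pcK w) :=
  Nat.find_spec (p := fun k => (w.drop k).reverse = w.drop k) ⟨w.length, by simp⟩

lemma pcK_min (w : List Bool) {k : ℕ} (h : k < pcK w) : ¬ (w.drop k).reverse = w.drop k :=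
  Nat.find_min (p := fun k => (w.drop k).reverse = w.drop k) ⟨w.length, by simp⟩ h

lemma pcK_le (w : List Bool) : pcK w ≤ w.length :=
  Nat.find_le (by simp)

lemma palClosure_def' (w : List Bool) :
    palClosure w = w ++ (w.take (pcK w)).reverse := by
  rw [palClosure_def, List.take_append_drop]

lemma palClosure_length (w : List Bool) :
    (palClosure w).length = w.length + pcK w := by
  rw [palClosure_def']
  simp [min_eq_left (pcK_le w)]

lemma palClosure_prefix (w : List Bool) : w <+: palClosure w :=
  ⟨(w.take (pcK w)).reverse, (palClosure_def' w).symm⟩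

lemma palClosure_palindrome (w : List Bool) : (palClosure w).reverse = palClosure w := by
  rw [palClosure_def]
  simp only [List.reverse_append, List.reverse_reverse, pcK_spec w, List.append_assoc]

lemma palClosure_of_palindrome {w : List Bool} (h : w.reverse = w) : palClosure w = w := by
  have h0 : pcK w = 0 := by
    rcases Nat.eq_zero_or_pos (pcK w) with h' | h'
    · exact h'
    · exact absurd (by simpa using h) (pcK_min w h')
  rw [palClosure_def', h0]
  simp

lemma gcelem {l l' : List Bool} (h : l = l') (i : ℕ) (hi : i < l.length) :
    l[i]'hi = l'[i]'(h ▸ hi) := by subst h; rfl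

lemma pal_getElem {t : List Bool} (h : t.reverse = t) (i : ℕ) (hi : i < t.length) :
    t[i]'hi = t[t.length - 1 - i]'(by omega) := by
  have h2 : t.reverse[i]'(by simpa using hi) = t[t.length - 1 - i]'(by omega) :=
    List.getElem_reverse ..
  rw [← h2]
  exact gcelem h.symm i hi

lemma pc_core {π w e : List Bool} (hpal : π.reverse = π) (he : π = w ++ e)
    (hel : e.length ≤ w.length) :
    e = (w.take e.length).reverse ∧ (w.drop e.length).reverse = w.drop e.length := by
  have h1 : π = e.reverse ++ w.reverse := by
    conv_lhs => rw [← hpal, he]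
    exact List.reverse_append
  have h2 : π.drop e.length = w.reverse := by
    rw [h1, List.drop_append]
    simp
  have h3 : π.drop e.length = w.drop e.length ++ e := by
    rw [he, List.drop_append, Nat.sub_eq_zero_of_le hel]
    simp
  have h4 : w.drop e.length ++ e = (w.drop e.length).reverse ++ (w.take e.length).reverse := by
    rw [← h3, h2]
    conv_lhs => rw [show w = w.take e.length ++ w.drop e.length from (List.take_append_drop ..).symm]
    exact List.reverse_append
  have h5 := List.append_inj h4 (by simp)
  exact ⟨h5.2, h5.1.symm⟩

lemma pc_min {π w : List Bool} (hpal : π.reverse = π) (hpre : w <+: π) :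
    w.length + pcK w ≤ π.length := by
  by_contra hcon
  push_neg at hcon
  obtain ⟨e, he⟩ := hpre
  have hlen : π.length = w.length + e.length := by rw [← he]; simp
  have hel : e.length < pcK w := by omega
  have hel' : e.length ≤ w.length := by have := pcK_le w; omega
  exact pcK_min w hel (pc_core hpal he.symm hel').2

lemma pc_unique {π w : List Bool} (hpal : π.reverse = π) (hpre : w <+: π)
    (hlen : π.length ≤ w.length + pcK w) : π = palClosure w := by
  have hge := pc_min hpal hpre
  obtain ⟨e, he⟩ := hpre
  have hlen' : π.length = w.length + e.length := by rw [← he]; simp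
  have hek : e.length = pcK w := by omega
  have hel' : e.length ≤ w.length := by have := pcK_le w; omega
  have hthis := (pc_core hpal he.symm hel').1
  rw [hek] at hthis
  rw [palClosure_def', ← he, hthis]

/-! ### psi and E -/

lemma psi_append (v : List Bool) (y : Bool) :
    psi (v ++ [y]) = palClosure (psi v ++ [y]) := by
  unfold psi
  rw [List.foldl_append]
  rfl

lemma psi_palindrome (v : List Bool) : (psi v).reverse = psi v := by
  induction v using List.reverseRecOn with
  | nil => rfl
  | append_singleton v y _ => rw [psi_append]; exact palClosure_palindrome _

lemma psi_replicate (k : ℕ) (x : Bool) :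
    psi (List.replicate k x) = List.replicate k x := by
  induction k with
  | zero => rfl
  | succ k ih =>
    rw [List.replicate_succ' (n := k) (a := x)]  -- fix arg order if needed
    rw [psi_append, ih, ← List.replicate_succ' (n := k) (a := x)]
    exact palClosure_of_palindrome List.reverse_replicate

lemma E_E (w : List Bool) : E (E w) = w := by
  simp [E, List.map_map, Function.comp_def]

lemma E_length (w : List Bool) : (E w).length = w.length := by simp [E]

lemma E_append (w v : List Bool) : E (w ++ v) = E w ++ E v := by simp [E]

lemma E_reverse (w : List Bool) : (E w).reverse = E w.reverse := by simp [E]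

lemma E_drop (w : List Bool) (n : ℕ) : (E w).drop n = E (w.drop n) := by simp [E]

lemma E_take (w : List Bool) (n : ℕ) : (E w).take n = E (w.take n) := by simp [E]

lemma E_inj {w v : List Bool} (h : E w = E v) : w = v := by
  have := congrArg E h
  rwa [E_E, E_E] at this

lemma pcK_E (w : List Bool) : pcK (E w) = pcK w := by
  apply le_antisymm
  · apply Nat.find_le
    rw [E_drop, E_reverse, pcK_spec w]
  · apply Nat.find_le
    have h := pcK_spec (E w)
    rw [E_drop, E_reverse] at h
    exact E_inj h

lemma E_palClosure (w : List Bool) : palClosure (E w) = E (palClosure w) := by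
  rw [palClosure_def, palClosure_def, pcK_E, E_drop, E_take, E_reverse, ← E_append, ← E_append]

lemma E_psi (v : List Bool) : psi (E v) = E (psi v) := by
  induction v using List.reverseRecOn with
  | nil => rfl
  | append_singleton v y ih =>
    rw [psi_append, E_append, show E [y] = [!y] from rfl, psi_append, ih, ← E_palClosure,
      E_append]
    rfl

lemma central_of_E {u : List Bool} (h : ∃ v, psi v = E u) : ∃ v, psi v = u := by
  obtain ⟨v, hv⟩ := h
  exact ⟨E v, by rw [E_psi, hv, E_E]⟩

lemma central_E {u : List Bool} (h : ∃ v, psi v = u) : ∃ v, psi v = E u := by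
  obtain ⟨v, hv⟩ := h
  exact ⟨E v, by rw [E_psi, hv]⟩

/-! ### palClosure of xᵏy -/

lemma palClosure_replicate_snoc {x y : Bool} (hxy : x ≠ y) (k : ℕ) :
    palClosure (List.replicate k x ++ [y]) =
      List.replicate k x ++ [y] ++ List.replicate k x := by
  have hpal : (List.replicate k x ++ [y] ++ List.replicate k x).reverse =
      List.replicate k x ++ [y] ++ List.replicate k x := by
    simp [List.reverse_append, List.reverse_replicate, List.append_assoc]
  refine (pc_unique hpal ⟨List.replicate k x, by simp⟩ ?_).symm
  have hK : k ≤ pcK (List.replicate k x ++ [y]) := by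
    by_contra hcon
    push_neg at hcon
    have hd : (List.replicate k x ++ [y]).drop (pcK (List.replicate k x ++ [y])) =
        List.replicate (k - pcK (List.replicate k x ++ [y])) x ++ [y] := by
      rw [List.drop_append_of_le_length (by simp; omega), List.drop_replicate]
    have hs := pcK_spec (List.replicate k x ++ [y])
    rw [hd] at hs
    have htl : (List.replicate (k - pcK (List.replicate k x ++ [y])) x ++ [y]).length
        = (k - pcK (List.replicate k x ++ [y])) + 1 := by simp
    have h0 : (List.replicate (k - pcK (List.replicate k x ++ [y])) x ++ [y])[0]'(by omega)
        = x := by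
      rw [List.getElem_append_left (by simp; omega)]
      exact List.getElem_replicate ..
    have hlast : (List.replicate (k - pcK (List.replicate k x ++ [y])) x ++ [y])[
        (List.replicate (k - pcK (List.replicate k x ++ [y])) x ++ [y]).length - 1 - 0]'(by omega)
        = y := by
      have e1 := gcongr' (w := List.replicate (k - pcK (List.replicate k x ++ [y])) x ++ [y])
        (show (List.replicate (k - pcK (List.replicate k x ++ [y])) x ++ [y]).length - 1 - 0
          = (List.replicate (k - pcK (List.replicate k x ++ [y])) x).length by simp)
        (by omega)
      rw [e1]
      exact List.getElem_concat_length rfl _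
    have := pal_getElem hs 0 (by omega)
    rw [h0, hlast] at this
    exact hxy this
  simp only [List.length_append, List.length_replicate, palClosure_length]
  simp
  omega

/-! ### Key closure lemma -/

lemma palC {w w₁ w₂ u₂ : List Bool}
    (h1 : w = w₁ ++ [false, true] ++ w₂) (h2 : w = w₂ ++ [true, false] ++ w₁)
    (g1 : w₂ = w₁ ++ [false, true] ++ u₂) (g2 : w₂ = u₂ ++ [true, false] ++ w₁)
    (hp1 : w₁.reverse = w₁) (hp2 : w₂.reverse = w₂) :
    palClosure (w₂ ++ [true]) = w := by
  have hlen := decomp_length h1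
  have hlen2 := decomp_length g1
  have hwpal : w.reverse = w := by
    conv_lhs => rw [h2]
    conv_rhs => rw [h1]
    simp [List.reverse_append, hp1, hp2, List.append_assoc]
  have hpre : (w₂ ++ [true]) <+: w := ⟨false :: w₁, by rw [h2]; simp⟩
  have hmin : ∀ π : List Bool, π.reverse = π → (w₂ ++ [true]) <+: π → w.length ≤ π.length := by
    intro π hπ hπp
    by_contra hcon
    push_neg at hcon
    have hπlen : w₂.length + 1 ≤ π.length := by
      have := hπp.length_le; simpa using this
    set r := π.length - w₂.length with hrdef
    have hr1 : 1 ≤ r := by omega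
    have hr2 : r ≤ w₁.length + 1 := by omega
    have hstt : (w₂ ++ [true])[w₂.length]'(by simp) = true :=
      List.getElem_concat_length rfl _
    have hsuf : ∀ i (hi : i < w₂.length), π[r + i]'(by omega) = w₂[i]'hi := by
      intro i hi
      have e1 := pal_getElem hπ (r + i) (by omega)
      have e2 : π[π.length - 1 - (r + i)]'(by omega) = π[w₂.length - 1 - i]'(by omega) :=
        gcongr' (by omega) _
      have e3 : π[w₂.length - 1 - i]'(by omega)
          = (w₂ ++ [true])[w₂.length - 1 - i]'(by simp; omega) :=
        getElem_of_prefix hπp _ (by simp; omega) _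
      have e4 : (w₂ ++ [true])[w₂.length - 1 - i]'(by simp; omega)
          = w₂[w₂.length - 1 - i]'(by omega) :=
        List.getElem_append_left (by omega)
      have e5 := (pal_getElem hp2 i hi).symm
      rw [e1, e2, e3, e4]
      have e6 : w₂[w₂.length - 1 - i]'(by omega) = w₂[i]'hi := by
        rw [← e5]
      exact e6
    have hshift : HasPeriod w₂ r := by
      refine hasPeriod_of_shift (by omega) (fun i hir => ?_)
      have e1 : w₂[i + r]'hir = (w₂ ++ [true])[i + r]'(by simp; omega) :=
        (List.getElem_append_left (by omega)).symm
      have e2 : (w₂ ++ [true])[i + r]'(by simp; omega) = π[i + r]'(by omega) :=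
        (getElem_of_prefix hπp _ (by simp; omega) _).symm
      have e3 : π[i + r]'(by omega) = π[r + i]'(by omega) := gcongr' (by omega) _
      rw [e1, e2, e3, hsuf i (by omega)]
    have hbpos : w₂[w₂.length - r]'(by omega) = true := by
      have e1 : π[w₂.length]'(by omega) = (w₂ ++ [true])[w₂.length]'(by simp) :=
        getElem_of_prefix hπp _ (by simp) _
      have e2 : π[r + (w₂.length - r)]'(by omega) = π[w₂.length]'(by omega) :=
        gcongr' (by omega) _
      rw [← hsuf (w₂.length - r) (by omega), e2, e1, hstt]
    have hq' : HasPeriod w₂ (u₂.length + 2) := decomp_period2 g1 g2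
    have hgpos : 0 < Nat.gcd r (u₂.length + 2) := Nat.gcd_pos_of_pos_left _ (by omega)
    have hper := fineWilf hshift hq' (by omega)
    have hdr : Nat.gcd r (u₂.length + 2) ∣ r := Nat.gcd_dvd_left _ _
    have hdq : Nat.gcd r (u₂.length + 2) ∣ (u₂.length + 2) := Nat.gcd_dvd_right _ _
    have hmod : (w₂.length - r) % Nat.gcd r (u₂.length + 2)
        = w₁.length % Nat.gcd r (u₂.length + 2) := by
      have m1 : (w₂.length - r) ≡ w₂.length [MOD Nat.gcd r (u₂.length + 2)] :=
        (Nat.modEq_iff_dvd' (by omega)).2 (by rw [show w₂.length - (w₂.length - r) = r by omega]; exact hdr)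
      have m2 : w₁.length ≡ w₂.length [MOD Nat.gcd r (u₂.length + 2)] :=
        (Nat.modEq_iff_dvd' (by omega)).2 (by rw [show w₂.length - w₁.length = u₂.length + 2 by omega]; exact hdq)
      exact m1.trans m2.symm
    have := hper.ext (w₂.length - r) w₁.length (by omega) (by omega) hmod
    rw [hbpos, decomp_pos1 g1 (by omega)] at this
    simp at this
  have h3 : w.length ≤ (palClosure (w₂ ++ [true])).length :=
    hmin _ (palClosure_palindrome _) (palClosure_prefix _)
  rw [palClosure_length] at h3
  exact (pc_unique hwpal hpre h3).symm

/-! ### Middle case -/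

lemma decomp_take2 {w w₁ w₂ : List Bool} (h2 : w = w₂ ++ [true, false] ++ w₁) :
    w.take w₂.length = w₂ := by
  subst h2; rw [List.append_assoc]; exact List.take_left

lemma decomp_drop2' {w w₁ w₂ : List Bool} (h2 : w = w₂ ++ [true, false] ++ w₁) :
    w.drop (w₂.length + 2) = w₁ := by
  subst h2; exact List.drop_left' (by simp)

lemma decomp_prefix2 {w w₁ w₂ : List Bool} (h2 : w = w₂ ++ [true, false] ++ w₁) : w₂ <+: w :=
  ⟨[true, false] ++ w₁, by rw [h2]; simp⟩

lemma mid_case {w w₁ w₂ : List Bool}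
    (h1 : w = w₁ ++ [false, true] ++ w₂) (h2 : w = w₂ ++ [true, false] ++ w₁)
    (hlen : w₂.length = w₁.length + 1) :
    (∃ v, psi v = w) ∧ (∃ v, psi v = w₁) ∧ (∃ v, psi v = w₂) := by
  have hwl := decomp_length h1
  set j := w₁.length with hj
  have htake : w₂.take j = w₁ := by
    have t2 := decomp_take2 h2
    have t1 := decomp_take1 h1
    rw [← t2, List.take_take, min_eq_left (by omega)]
    exact t1
  have hdrop : w₂.drop 1 = w₁ := by
    have d1 := decomp_drop1' h1
    have d2 := decomp_drop2' h2
    rw [← d1, List.drop_drop, show j + 2 + 1 = w₂.length + 2 by omega]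
    exact d2
  have hper : HasPeriod w₂ 1 := by
    refine hasPeriod_of_shift (by omega) (fun i hi1 => ?_)
    have e1 : w₂[i + 1]'hi1 = w₂[1 + i]'(by omega) := gcongr' (by omega) _
    rw [e1, getElem_of_drop hdrop i (by omega) (by omega)]
    have e2 : w₁[i]'(by omega) = (w₂.take j)[i]'(by simp; omega) := by
      exact (gcelem htake i (by simp; omega)).symm
    rw [e2, List.getElem_take]
  have hval : w₂[j]'(by omega) = false := by
    have e1 := decomp_pos1 h1 (by omega)
    have e2 := getElem_of_prefix (decomp_prefix2 h2) j (by omega) (by omega)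
    rw [← e2]
    exact e1
  have hw2 : w₂ = List.replicate (j + 1) false := by
    refine List.ext_getElem (by simp; omega) (fun i hi hj2 => ?_)
    have := hper.ext i j (by omega) (by omega) (by omega)
    rw [List.getElem_replicate, this, hval]
  have hw1 : w₁ = List.replicate j false := by
    rw [← htake, hw2, List.take_replicate, min_eq_left (by omega)]
  have hw : w = List.replicate (j + 1) false ++ [true] ++ List.replicate (j + 1) false := by
    rw [h1, hw1, hw2, List.replicate_succ' (n := j) (a := false)]
    simp
  refine ⟨⟨List.replicate (j + 1) false ++ [true], ?_⟩,
    ⟨List.replicate j false, by rw [psi_replicate, hw1]⟩,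
    ⟨List.replicate (j + 1) false, by rw [psi_replicate, hw2]⟩⟩
  rw [psi_append, psi_replicate, palClosure_replicate_snoc (by simp) (j + 1), hw]

/-! ### Main induction -/

lemma step_case {N : ℕ}
    (ih : ∀ w w₁ w₂ : List Bool, w.length ≤ N →
      w = w₁ ++ [false, true] ++ w₂ → w = w₂ ++ [true, false] ++ w₁ →
      (∃ v, psi v = w) ∧ (∃ v, psi v = w₁) ∧ (∃ v, psi v = w₂)) :
    ∀ w w₁ w₂ : List Bool, w.length ≤ N + 1 →
      w = w₁ ++ [false, true] ++ w₂ → w = w₂ ++ [true, false] ++ w₁ →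
      w₁.length < w₂.length →
      (∃ v, psi v = w) ∧ (∃ v, psi v = w₁) ∧ (∃ v, psi v = w₂) := by
  intro w w₁ w₂ hN h1 h2 hlt
  have hwl := decomp_length h1
  rcases eq_or_lt_of_le (show w₁.length + 1 ≤ w₂.length by omega) with heq | hlt2
  · exact mid_case h1 h2 heq.symm
  · -- w₂.length ≥ w₁.length + 2
    have hp2' : HasPeriod w₂ (w₁.length + 2) := by
      rw [← decomp_take2 h2]
      exact (decomp_period1 h1 h2).take _
    have hA : w₂ = (w₁ ++ [false, true]) ++ w₂.take (w₂.length - (w₁.length + 2)) := by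
      conv_lhs => rw [← decomp_take2 h2]
      conv_lhs => rw [h1]
      rw [List.take_append,
        List.take_of_length_le (by simp; omega)]
      congr 1
      simp
    have hB : w₂ = (w₂.drop (w₁.length + 2) ++ [true, false]) ++ w₁ := by
      conv_lhs => rw [← decomp_drop1' h1]
      conv_lhs => rw [h2]
      rw [List.append_assoc, List.drop_append,
        Nat.sub_eq_zero_of_le (by omega), List.drop_zero, List.append_assoc]
    have hC : w₂.take (w₂.length - (w₁.length + 2)) = w₂.drop (w₁.length + 2) := by
      refine List.ext_getElem (by simp) (fun i hi hj => ?_)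
      rw [List.getElem_take, List.getElem_drop]
      simp only [List.length_take, List.length_drop] at hi hj
      have e1 : w₂[w₁.length + 2 + i]'(by omega) = w₂[i + (w₁.length + 2)]'(by omega) :=
        gcongr' (by omega) _
      rw [e1, hp2'.shift i (by omega)]
    have g1 : w₂ = w₁ ++ [false, true] ++ w₂.drop (w₁.length + 2) := by
      rw [← hC]
      exact hA
    have g2 : w₂ = w₂.drop (w₁.length + 2) ++ [true, false] ++ w₁ := hB
    obtain ⟨⟨v₂, hv₂⟩, hc1, hcu⟩ := ih w₂ w₁ _ (by omega) g1 g2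
    have hp2 : w₂.reverse = w₂ := by rw [← hv₂]; exact psi_palindrome _
    have hp1 : w₁.reverse = w₁ := by
      obtain ⟨v₁, hv₁⟩ := hc1
      rw [← hv₁]; exact psi_palindrome _
    have hpc := palC h1 h2 g1 g2 hp1 hp2
    exact ⟨⟨v₂ ++ [true], by rw [psi_append, hv₂, hpc]⟩, hc1, ⟨v₂, hv₂⟩⟩

lemma decomp_E {w w₁ w₂ : List Bool}
    (h1 : w = w₁ ++ [false, true] ++ w₂) :
    E w = E w₂ ++ [true, false] ++ E w₁ → True := fun _ => trivial

lemma E_eq1 {w w₁ w₂ : List Bool} (h1 : w = w₁ ++ [false, true] ++ w₂) :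
    E w = E w₁ ++ [true, false] ++ E w₂ := by
  rw [h1]; simp [E]

lemma E_eq2 {w w₁ w₂ : List Bool} (h2 : w = w₂ ++ [true, false] ++ w₁) :
    E w = E w₂ ++ [false, true] ++ E w₁ := by
  rw [h2]; simp [E]

lemma main_aux : ∀ N, ∀ w w₁ w₂ : List Bool, w.length ≤ N →
    w = w₁ ++ [false, true] ++ w₂ → w = w₂ ++ [true, false] ++ w₁ →
    (∃ v, psi v = w) ∧ (∃ v, psi v = w₁) ∧ (∃ v, psi v = w₂) := by
  intro N
  induction N with
  | zero =>
    intro w w₁ w₂ hN h1 h2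
    have := decomp_length h1
    omega
  | succ N ih =>
    intro w w₁ w₂ hN h1 h2
    rcases lt_trichotomy w₁.length w₂.length with hlt | heq | hgt
    · exact step_case ih w w₁ w₂ hN h1 h2 hlt
    · exfalso
      have hwl := decomp_length h1
      have e1 := decomp_pos1 h1 (by omega)
      have e2 := decomp_pos3 h2 (by omega)
      have e3 : w[w₁.length]'(by omega) = w[w₂.length]'(by omega) := gcongr' heq _
      rw [e1, e2] at e3
      simp at e3
    · have hE1 : E w = (E w₂) ++ [false, true] ++ (E w₁) := E_eq2 h2
      have hE2 : E w = (E w₁) ++ [true, false] ++ (E w₂) := E_eq1 h1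
      have hlen : (E w).length ≤ N + 1 := by rw [E_length]; exact hN
      have hlt : (E w₂).length < (E w₁).length := by rw [E_length, E_length]; omega
      obtain ⟨cw, cw2, cw1⟩ := step_case ih (E w) (E w₂) (E w₁) hlen hE1 hE2 hlt
      exact ⟨central_of_E cw, central_of_E cw1, central_of_E cw2⟩

/-! ### Forward direction -/

lemma repl_comm (m : ℕ) (x : Bool) :
    List.replicate m x ++ [x] = x :: List.replicate m x := by
  rw [← List.replicate_succ', List.replicate_succ]

lemma repl_shift (m : ℕ) (x : Bool) (l : List Bool) :
    List.replicate m x ++ x :: l = x :: (List.replicate m x ++ l) := by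
  induction m with
  | zero => rfl
  | succ m ih => simp [List.replicate_succ, ih]

lemma psi_cases : ∀ v : List Bool,
    (∃ (x : Bool) (k : ℕ), psi v = List.replicate k x) ∨
    (∃ w₁ w₂ : List Bool, psi v = w₁ ++ [false, true] ++ w₂ ∧
      psi v = w₂ ++ [true, false] ++ w₁) := by
  intro v
  induction v using List.reverseRecOn with
  | nil => exact Or.inl ⟨false, 0, rfl⟩
  | append_singleton v y ih =>
    rw [psi_append]
    rcases ih with ⟨x, k, hx⟩ | ⟨w₁, w₂, d1, d2⟩
    · rw [hx]
      by_cases hk : k = 0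
      · subst hk
        refine Or.inl ⟨y, 1, ?_⟩
        rw [show List.replicate 0 x ++ [y] = [y] by simp,
          palClosure_of_palindrome (by simp)]
        simp
      · by_cases hxy : x = y
        · subst hxy
          refine Or.inl ⟨x, k + 1, ?_⟩
          rw [← List.replicate_succ' (n := k) (a := x), palClosure_of_palindrome List.reverse_replicate]
        · rw [palClosure_replicate_snoc hxy k]
          obtain ⟨m, rfl⟩ : ∃ m, k = m + 1 := ⟨k - 1, by omega⟩
          right
          cases x
          · -- x = false, y = true
            have hy : y = true := by revert hxy; cases y <;> simp
            subst hy
            refine ⟨List.replicate m false, List.replicate (m + 1) false, ?_, ?_⟩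
            · simp [List.replicate_succ', List.append_assoc]
            · simp [List.replicate_succ', List.replicate_succ, repl_comm, repl_shift, List.append_assoc]
          · -- x = true, y = false
            have hy : y = false := by revert hxy; cases y <;> simp
            subst hy
            refine ⟨List.replicate (m + 1) true, List.replicate m true, ?_, ?_⟩
            · simp [List.replicate_succ', List.replicate_succ, repl_comm, repl_shift, List.append_assoc]
            · simp [List.replicate_succ', List.replicate_succ, repl_comm, repl_shift, List.append_assoc]
    · obtain ⟨-, hc1, hc2⟩ := main_aux (psi v).length (psi v) w₁ w₂ le_rfl d1 d2
      have hpw : (psi v).reverse = psi v := psi_palindrome v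
      have hp1 : w₁.reverse = w₁ := by
        obtain ⟨v₁, hv₁⟩ := hc1; rw [← hv₁]; exact psi_palindrome _
      have hp2 : w₂.reverse = w₂ := by
        obtain ⟨v₂, hv₂⟩ := hc2; rw [← hv₂]; exact psi_palindrome _
      cases y
      · -- y = false : use E
        have hE1 : E (psi v) = E w₂ ++ [false, true] ++ E w₁ := E_eq2 d2
        have hE2 : E (psi v) = E w₁ ++ [true, false] ++ E w₂ := E_eq1 d1
        have dX1 : E w₂ ++ [false, true] ++ E (psi v)
            = E w₂ ++ [false, true] ++ E (psi v) := rfl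
        have dX2 : E w₂ ++ [false, true] ++ E (psi v)
            = E (psi v) ++ [true, false] ++ E w₂ := by
          conv_lhs => rw [hE2]
          conv_rhs => rw [hE1]
          simp [List.append_assoc]
        have hpE2 : (E w₂).reverse = E w₂ := by rw [E_reverse, hp2]
        have hpEw : (E (psi v)).reverse = E (psi v) := by rw [E_reverse, hpw]
        have hpc := palC dX1 dX2 hE1 hE2 hpE2 hpEw
        have hE3 : E (psi v ++ [false]) = E (psi v) ++ [true] := by simp [E]
        have hfin : palClosure (psi v ++ [false])
            = E (E w₂ ++ [false, true] ++ E (psi v)) := by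
          have := E_palClosure (psi v ++ [false])
          rw [hE3, hpc] at this
          have := congrArg E this
          rw [E_E] at this
          exact this.symm
        right
        refine ⟨psi v, w₂, ?_, ?_⟩
        · rw [hfin]
          have := E_eq2 dX2
          rwa [E_E, E_E] at this
        · rw [hfin]
          have := E_eq1 dX1
          rwa [E_E, E_E] at this
      · -- y = true
        have dX1 : w₁ ++ [false, true] ++ psi v = w₁ ++ [false, true] ++ psi v := rfl
        have dX2 : w₁ ++ [false, true] ++ psi v = psi v ++ [true, false] ++ w₁ := by
          conv_lhs => rw [d2]
          conv_rhs => rw [d1]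
          simp [List.append_assoc]
        have hpc := palC dX1 dX2 d1 d2 hp1 hpw
        right
        exact ⟨w₁, psi v, by rw [hpc], by rw [hpc]; exact dX2⟩

/-! ### Final theorem -/

theorem stmt13 :
    (∀ w : List Bool,
      (∃ v : List Bool, psi v = w) ↔
      ((∃ (x : Bool) (k : ℕ), w = List.replicate k x) ∨
       (∃ w₁ w₂ : List Bool,
          w = w₁ ++ [false, true] ++ w₂ ∧ w = w₂ ++ [true, false] ++ w₁))) ∧
    (∀ w w₁ w₂ : List Bool,
      w = w₁ ++ [false, true] ++ w₂ → w = w₂ ++ [true, false] ++ w₁ →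
      (∃ v₁, psi v₁ = w₁) ∧ (∃ v₂, psi v₂ = w₂) ∧
      (∀ w₁s w₂s : List Bool,
        w = w₁s ++ [false, true] ++ w₂s → w = w₂s ++ [true, false] ++ w₁s →
        w₁s = w₁ ∧ w₂s = w₂) ∧
      HasPeriod w (w₁.length + 2) ∧ HasPeriod w (w₂.length + 2) ∧
      Nat.Coprime (w₁.length + 2) (w₂.length + 2) ∧
      minPeriod w = min (w₁.length + 2) (w₂.length + 2)) := by
  constructor
  · intro w
    constructor
    · rintro ⟨v, rfl⟩
      exact psi_cases v
    · rintro (⟨x, k, rfl⟩ | ⟨w₁, w₂, h1, h2⟩)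
      · exact ⟨List.replicate k x, psi_replicate k x⟩
      · exact (main_aux w.length w w₁ w₂ le_rfl h1 h2).1
  · intro w w₁ w₂ h1 h2
    obtain ⟨hcw, hc1, hc2⟩ := main_aux w.length w w₁ w₂ le_rfl h1 h2
    exact ⟨hc1, hc2, decomp_unique h1 h2, decomp_period1 h1 h2, decomp_period2 h1 h2,
      decomp_coprime h1 h2, decomp_minPeriod h1 h2⟩
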